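/- Let (X, 𝔄) be a measurable space, μ a probability measure on X, and g : X → ℝ a bounded measurable function. Then lim_{M → ∞} ∫_{X^M} log( (1/M) ∑_{m=1}^M exp(g(x_m)) ) dμ^{⊗M}(x_1, …, x_M) = log ∫_X exp(g(x)) dμ(x). -/

import Mathlib

open MeasureTheory Filter

private lemma integrable_of_bdd {α : Type*} [MeasurableSpace α] {ν : Measure α}
    [IsFiniteMeasure ν] {u : α → ℝ} (hu : Measurable u) (C : ℝ) (hC : ∀ x, |u x| ≤ C) :
    Integrable u ν :=
  (integrable_const C).mono' hu.aestronglyMeasurable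
    (Filter.Eventually.of_forall (by simpa [Real.norm_eq_abs] using hC))

private lemma log_lip {a b c : ℝ} (hc : 0 < c) (ha : c ≤ a) (hb : c ≤ b) :
    |Real.log a - Real.log b| ≤ |a - b| / c := by
  wlog hab : b ≤ a generalizing a b
  · rw [abs_sub_comm, abs_sub_comm a b]; exact this hb ha (le_of_not_ge hab)
  have hbpos : 0 < b := lt_of_lt_of_le hc hb
  have hapos : 0 < a := lt_of_lt_of_le hc ha
  rw [abs_of_nonneg (sub_nonneg.2 (Real.log_le_log hbpos hab)),
    abs_of_nonneg (sub_nonneg.2 hab),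
    ← Real.log_div (ne_of_gt hapos) (ne_of_gt hbpos)]
  calc Real.log (a / b) ≤ a / b - 1 := Real.log_le_sub_one_of_pos (div_pos hapos hbpos)
    _ = (a - b) / b := by field_simp
    _ ≤ (a - b) / c := by
        apply div_le_div_of_nonneg_left (sub_nonneg.2 hab) hc hb

private lemma abs_le_eps_add {u ε : ℝ} (hε : 0 < ε) : |u| ≤ ε + u ^ 2 / ε := by
  rcases le_or_gt |u| ε with h | h
  · have h2 : 0 ≤ u ^ 2 / ε := div_nonneg (sq_nonneg u) hε.le
    linarith
  · have hu : 0 < |u| := hε.trans h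
    have h1 : |u| = u ^ 2 / |u| := by
      rw [← sq_abs, sq, mul_div_assoc, div_self hu.ne', mul_one]
    have h2 : u ^ 2 / |u| ≤ u ^ 2 / ε :=
      div_le_div_of_nonneg_left (sq_nonneg u) hε h.le
    linarith

/-- Variance-type computation for i.i.d. sums on a product measure. -/
private lemma integral_sum_sq {X : Type*} [ms : MeasurableSpace X] (μ : Measure X)
    [IsProbabilityMeasure μ] (h : X → ℝ) (hm : Measurable h) (C : ℝ) (hb : ∀ x, |h x| ≤ C)
    (h0 : ∫ x, h x ∂μ = 0) (M : ℕ) :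
    ∫ x : Fin M → X, (∑ i, h (x i)) ^ 2 ∂(Measure.pi fun _ : Fin M => μ)
      = M * ∫ x, h x ^ 2 ∂μ := by
  letI : MeasureSpace X := { toMeasurableSpace := ms, volume := μ }
  haveI : IsProbabilityMeasure (volume : Measure X) := ‹IsProbabilityMeasure μ›
  have hpi : (Measure.pi fun _ : Fin M => μ) = (volume : Measure (Fin M → X)) := rfl
  rw [hpi]
  have hint : ∀ i j : Fin M, Integrable (fun x : Fin M → X => h (x i) * h (x j)) volume := by
    intro i j
    refine integrable_of_bdd ((hm.comp (measurable_pi_apply i)).mul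
      (hm.comp (measurable_pi_apply j))) (C * C) (fun x => ?_)
    rw [abs_mul]
    exact mul_le_mul (hb (x i)) (hb (x j)) (abs_nonneg _) ((abs_nonneg (h (x i))).trans (hb (x i)))
  have key : ∀ i j : Fin M, (∫ x : Fin M → X, h (x i) * h (x j))
      = if i = j then ∫ y, h y ^ 2 ∂μ else 0 := by
    intro i j
    have hprod : ∀ x : Fin M → X, h (x i) * h (x j) =
        ∏ k, ((if k = i then h (x k) else 1) * (if k = j then h (x k) else 1)) := by
      intro x
      rw [Finset.prod_mul_distrib, Finset.prod_ite_eq', Finset.prod_ite_eq']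
      simp
    simp_rw [hprod]
    erw [integral_fintype_prod_eq_prod (μ := fun _ => (volume : Measure X)) (f := fun k y =>
      (if k = i then h y else 1) * (if k = j then h y else 1))]
    by_cases hij : i = j
    · subst hij
      rw [if_pos rfl]
      have hfac : ∀ k : Fin M,
          (∫ y : X, (if k = i then h y else 1) * (if k = i then h y else 1))
            = if k = i then (∫ y, h y ^ 2 ∂μ) else 1 := by
        intro k
        by_cases hk : k = i
        · subst hk
          simp only [eq_self_iff_true, if_true]
          simp_rw [← sq]
          rfl
        · simp [hk]
      rw [Finset.prod_congr rfl (fun k _ => hfac k), Finset.prod_ite_eq']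
      simp
    · rw [if_neg hij]
      apply Finset.prod_eq_zero (Finset.mem_univ i)
      simp only [if_pos rfl, if_neg hij, mul_one]
      exact h0
  calc ∫ x : Fin M → X, (∑ i, h (x i)) ^ 2
      = ∫ x : Fin M → X, ∑ i, ∑ j, h (x i) * h (x j) := by
        congr 1; funext x; rw [sq, Finset.sum_mul_sum]
    _ = ∑ i : Fin M, ∑ j : Fin M, ∫ x : Fin M → X, h (x i) * h (x j) := by
        rw [integral_finset_sum _ (fun i _ => integrable_finset_sum _ (fun j _ => hint i j))]
        exact Finset.sum_congr rfl fun i _ => integral_finset_sum _ (fun j _ => hint i j)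
    _ = ∑ i : Fin M, ∑ j : Fin M, if i = j then (∫ y, h y ^ 2 ∂μ) else 0 := by
        exact Finset.sum_congr rfl fun i _ => Finset.sum_congr rfl fun j _ => key i j
    _ = M * ∫ y, h y ^ 2 ∂μ := by
        simp [Finset.sum_ite_eq, Finset.card_univ, mul_comm]

/-- Law-of-large-numbers limit: for bounded measurable g, the expectation of
log of the empirical average of exp(g) over M i.i.d. samples converges, as M → ∞,
to log of the expectation of exp(g). -/
theorem log_mean_exp_tendsto
    {X : Type*} [MeasurableSpace X] (μ : Measure X) [IsProbabilityMeasure μ]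
    (g : X → ℝ) (hg : Measurable g) (B : ℝ) (hB : ∀ x, |g x| ≤ B) :
    Tendsto (fun M : ℕ =>
        ∫ x : Fin M → X,
          Real.log ((1 / (M : ℝ)) * ∑ m, Real.exp (g (x m)))
          ∂(Measure.pi fun _ : Fin M => μ))
      atTop (nhds (Real.log (∫ x, Real.exp (g x) ∂μ))) := by
  have hXne : Nonempty X := by
    by_contra hX
    have h1 : μ Set.univ = 0 := by
      rw [Set.univ_eq_empty_iff.2 (not_nonempty_iff.1 hX)]
      exact measure_empty
    rw [measure_univ] at h1
    exact one_ne_zero h1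
  have hB0 : 0 ≤ B := (abs_nonneg _).trans (hB hXne.some)
  set f : X → ℝ := fun x => Real.exp (g x) with hf
  have hfm : Measurable f := Real.measurable_exp.comp hg
  have hfl : ∀ x, Real.exp (-B) ≤ f x := fun x => Real.exp_le_exp.2 (neg_le_of_abs_le (hB x))
  have hfu : ∀ x, f x ≤ Real.exp B := fun x => Real.exp_le_exp.2 (le_of_abs_le (hB x))
  have hfabs : ∀ x, |f x| ≤ Real.exp B := fun x => by
    rw [abs_of_pos (Real.exp_pos _)]; exact hfu x
  have hfi : Integrable f μ := integrable_of_bdd hfm _ hfabs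
  set m : ℝ := ∫ x, f x ∂μ with hm
  have hml : Real.exp (-B) ≤ m := by
    have h1 : ∫ _x : X, Real.exp (-B) ∂μ ≤ m := integral_mono (integrable_const _) hfi hfl
    simpa using h1
  have hmu : m ≤ Real.exp B := by
    have h1 : m ≤ ∫ _x : X, Real.exp B ∂μ := integral_mono hfi (integrable_const _) hfu
    simpa using h1
  have hmpos : 0 < m := lt_of_lt_of_le (Real.exp_pos _) hml
  set h : X → ℝ := fun x => f x - m with hh
  have hhm : Measurable h := hfm.sub measurable_const
  have hhb : ∀ x, |h x| ≤ 2 * Real.exp B := by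
    intro x
    have h2 : |m| ≤ Real.exp B := by
      rw [abs_of_pos hmpos]; exact hmu
    calc |f x - m| ≤ |f x| + |m| := abs_sub _ _
      _ ≤ 2 * Real.exp B := by have := hfabs x; linarith
  have h0 : ∫ x, h x ∂μ = 0 := by
    simp only [hh]
    rw [integral_sub hfi (integrable_const m)]
    simp [← hm]
  set V : ℝ := ∫ x, h x ^ 2 ∂μ with hV
  have hkey : ∀ M : ℕ, ∫ x : Fin M → X, (∑ i, h (x i)) ^ 2 ∂(Measure.pi fun _ : Fin M => μ)
      = M * V := fun M => integral_sum_sq μ h hhm _ hhb h0 M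
  set avg : ∀ M : ℕ, (Fin M → X) → ℝ := fun M x => (1 / (M : ℝ)) * ∑ i, f (x i) with havg
  have havgm : ∀ M : ℕ, Measurable (avg M) := fun M =>
    measurable_const.mul (Finset.measurable_sum Finset.univ fun i _ =>
      hfm.comp (measurable_pi_apply i))
  -- bounds on avg for M ≥ 1
  have havgl : ∀ M : ℕ, 1 ≤ M → ∀ x : Fin M → X, Real.exp (-B) ≤ avg M x := by
    intro M hM x
    have hMpos : (0 : ℝ) < M := by exact_mod_cast hM
    have hs : (M : ℝ) * Real.exp (-B) ≤ ∑ i, f (x i) := by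
      have := Finset.card_nsmul_le_sum Finset.univ (fun i => f (x i)) (Real.exp (-B))
        (fun i _ => hfl (x i))
      simpa [nsmul_eq_mul] using this
    have heq : (1 / (M : ℝ)) * ((M : ℝ) * Real.exp (-B)) = Real.exp (-B) := by
      field_simp
    calc Real.exp (-B) = (1 / (M : ℝ)) * ((M : ℝ) * Real.exp (-B)) := heq.symm
      _ ≤ avg M x := by
          apply mul_le_mul_of_nonneg_left hs
          positivity
  have havgu : ∀ M : ℕ, 1 ≤ M → ∀ x : Fin M → X, avg M x ≤ Real.exp B := by
    intro M hM x
    have hMpos : (0 : ℝ) < M := by exact_mod_cast hM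
    have hs : ∑ i, f (x i) ≤ (M : ℝ) * Real.exp B := by
      have := Finset.sum_le_card_nsmul Finset.univ (fun i => f (x i)) (Real.exp B)
        (fun i _ => hfu (x i))
      simpa [nsmul_eq_mul] using this
    have heq : (1 / (M : ℝ)) * ((M : ℝ) * Real.exp B) = Real.exp B := by
      field_simp
    calc avg M x ≤ (1 / (M : ℝ)) * ((M : ℝ) * Real.exp B) := by
          apply mul_le_mul_of_nonneg_left hs
          positivity
      _ = Real.exp B := heq
  -- avg - m as an average of h
  have havgsub : ∀ M : ℕ, 1 ≤ M → ∀ x : Fin M → X,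
      avg M x - m = (1 / (M : ℝ)) * ∑ i, h (x i) := by
    intro M hM x
    have hMne : (M : ℝ) ≠ 0 := by
      have : (0 : ℝ) < M := by exact_mod_cast hM
      exact this.ne'
    simp only [hh, Finset.sum_sub_distrib, Finset.sum_const, Finset.card_univ,
      Fintype.card_fin, nsmul_eq_mul, mul_sub, havg]
    field_simp
  -- second moment of avg - m
  have hsecond : ∀ M : ℕ, 1 ≤ M →
      ∫ x : Fin M → X, (avg M x - m) ^ 2 ∂(Measure.pi fun _ : Fin M => μ) = V / M := by
    intro M hM
    have hMne : (M : ℝ) ≠ 0 := by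
      have : (0 : ℝ) < M := by exact_mod_cast hM
      exact this.ne'
    have heq : ∀ x : Fin M → X, (avg M x - m) ^ 2
        = (1 / (M : ℝ)) ^ 2 * (∑ i, h (x i)) ^ 2 := by
      intro x
      rw [havgsub M hM x, mul_pow]
    simp_rw [heq]
    rw [integral_const_mul, hkey M]
    field_simp
  set I : ℕ → ℝ := fun M =>
    ∫ x : Fin M → X, |avg M x - m| ∂(Measure.pi fun _ : Fin M => μ) with hI
  have hsubm : ∀ M : ℕ, Measurable (fun x : Fin M → X => avg M x - m) :=
    fun M => (havgm M).sub measurable_const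
  have hsubb : ∀ M : ℕ, 1 ≤ M → ∀ x : Fin M → X, |avg M x - m| ≤ 2 * Real.exp B := by
    intro M hM x
    have h1 := havgl M hM x
    have h2 := havgu M hM x
    have h3 := Real.exp_pos (-B)
    rw [abs_le]
    constructor <;> nlinarith [Real.exp_pos B]
  -- bound on I M
  have hIbound : ∀ M : ℕ, 1 ≤ M → I M ≤ (1 + V) / Real.sqrt M := by
    intro M hM
    have hMpos : (0 : ℝ) < M := by exact_mod_cast hM
    set s : ℝ := Real.sqrt M with hsdef
    have hspos : 0 < s := Real.sqrt_pos.2 hMpos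
    have hss : s * s = (M : ℝ) := Real.mul_self_sqrt hMpos.le
    have hpt : ∀ x : Fin M → X, |avg M x - m| ≤ 1 / s + (avg M x - m) ^ 2 * s := by
      intro x
      have := abs_le_eps_add (u := avg M x - m) (ε := 1 / s) (by positivity)
      calc |avg M x - m| ≤ 1 / s + (avg M x - m) ^ 2 / (1 / s) := this
        _ = 1 / s + (avg M x - m) ^ 2 * s := by
            rw [div_div_eq_mul_div, div_one]
    have hint1 : Integrable (fun x : Fin M → X => |avg M x - m|)
        (Measure.pi fun _ : Fin M => μ) :=
      integrable_of_bdd (hsubm M).abs (2 * Real.exp B)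
        (fun x => by rw [abs_abs]; exact hsubb M hM x)
    have hint2' : Integrable (fun x : Fin M → X => (avg M x - m) ^ 2 * s)
        (Measure.pi fun _ : Fin M => μ) := by
      apply integrable_of_bdd (((hsubm M).pow_const 2).mul_const s)
        ((2 * Real.exp B) ^ 2 * s)
      intro x
      rw [abs_mul, abs_of_pos hspos, abs_pow]
      exact mul_le_mul_of_nonneg_right
        (pow_le_pow_left₀ (abs_nonneg _) (hsubb M hM x) 2) hspos.le
    have hint2 : Integrable (fun x : Fin M → X => 1 / s + (avg M x - m) ^ 2 * s)
        (Measure.pi fun _ : Fin M => μ) := (integrable_const _).add hint2'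
    have hVs : (V / (M : ℝ)) * s = V / s := by
      rw [← hss]
      field_simp
    calc I M ≤ ∫ x : Fin M → X, (1 / s + (avg M x - m) ^ 2 * s)
          ∂(Measure.pi fun _ : Fin M => μ) :=
        integral_mono hint1 hint2 hpt
      _ = 1 / s + (V / M) * s := by
          rw [integral_add (integrable_const _) hint2', integral_const,
            integral_mul_const, hsecond M hM]
          simp [measure_univ]
      _ = (1 + V) / s := by
          rw [hVs, add_div]
  -- logs are bounded
  have hlogm : ∀ M : ℕ, Measurable (fun x : Fin M → X => Real.log (avg M x)) :=
    fun M => Real.measurable_log.comp (havgm M)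
  have hlogb : ∀ M : ℕ, 1 ≤ M → ∀ x : Fin M → X, |Real.log (avg M x)| ≤ B := by
    intro M hM x
    rw [abs_le]
    constructor
    · have h1 := Real.log_le_log (Real.exp_pos (-B)) (havgl M hM x)
      rwa [Real.log_exp] at h1
    · have h1 := Real.log_le_log (lt_of_lt_of_le (Real.exp_pos _) (havgl M hM x)) (havgu M hM x)
      rwa [Real.log_exp] at h1
  have hlogmb : |Real.log m| ≤ B := by
    rw [abs_le]
    constructor
    · have h1 := Real.log_le_log (Real.exp_pos (-B)) hml
      rwa [Real.log_exp] at h1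
    · have h1 := Real.log_le_log hmpos hmu
      rwa [Real.log_exp] at h1
  have hfinal : ∀ M : ℕ, 1 ≤ M →
      dist (∫ x : Fin M → X, Real.log (avg M x) ∂(Measure.pi fun _ : Fin M => μ))
        (Real.log m) ≤ Real.exp B * I M := by
    intro M hM
    have hinta : Integrable (fun x : Fin M → X => Real.log (avg M x))
        (Measure.pi fun _ : Fin M => μ) :=
      integrable_of_bdd (hlogm M) B (hlogb M hM)
    rw [Real.dist_eq]
    have heq : (∫ x : Fin M → X, Real.log (avg M x) ∂(Measure.pi fun _ : Fin M => μ))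
        - Real.log m
        = ∫ x : Fin M → X, (Real.log (avg M x) - Real.log m)
            ∂(Measure.pi fun _ : Fin M => μ) := by
      rw [integral_sub hinta (integrable_const _), integral_const]
      simp [measure_univ]
    rw [heq]
    have hpt : ∀ x : Fin M → X, |Real.log (avg M x) - Real.log m|
        ≤ Real.exp B * |avg M x - m| := by
      intro x
      have h1 := log_lip (Real.exp_pos (-B)) (havgl M hM x) hml
      calc |Real.log (avg M x) - Real.log m| ≤ |avg M x - m| / Real.exp (-B) := h1
        _ = Real.exp B * |avg M x - m| := by
            rw [div_eq_mul_inv, ← Real.exp_neg, neg_neg, mul_comm]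
    calc |∫ x : Fin M → X, (Real.log (avg M x) - Real.log m)
          ∂(Measure.pi fun _ : Fin M => μ)|
        ≤ ∫ x : Fin M → X, |Real.log (avg M x) - Real.log m|
            ∂(Measure.pi fun _ : Fin M => μ) := by
          simpa [Real.norm_eq_abs] using
            norm_integral_le_integral_norm (μ := Measure.pi fun _ : Fin M => μ)
              (fun x : Fin M → X => Real.log (avg M x) - Real.log m)
      _ ≤ ∫ x : Fin M → X, Real.exp B * |avg M x - m|
            ∂(Measure.pi fun _ : Fin M => μ) := by
          apply integral_mono _ _ hpt
          · apply integrable_of_bdd ((hlogm M).sub measurable_const).abs (2 * B)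
            intro x
            rw [abs_abs]
            calc |Real.log (avg M x) - Real.log m|
                ≤ |Real.log (avg M x)| + |Real.log m| := abs_sub _ _
              _ ≤ 2 * B := by have := hlogb M hM x; have := hlogmb; linarith
          · exact (integrable_of_bdd ((hsubm M).abs) (2 * Real.exp B)
              (fun x => by rw [abs_abs]; exact hsubb M hM x)).const_mul _
      _ = Real.exp B * I M := by rw [integral_const_mul]
  have hsq : Tendsto (fun M : ℕ => Real.sqrt M) atTop atTop :=
    (tendsto_atTop_atTop_of_monotone (fun a b hab => Real.sqrt_le_sqrt hab)
      (fun b => ⟨b ^ 2, by rw [Real.sqrt_sq_eq_abs]; exact le_abs_self b⟩)).comp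
      tendsto_natCast_atTop_atTop
  have hbound0 : Tendsto (fun M : ℕ => Real.exp B * ((1 + V) / Real.sqrt M))
      atTop (nhds 0) := by
    have h1 : Tendsto (fun M : ℕ => (1 + V) / Real.sqrt M) atTop (nhds 0) :=
      Tendsto.div_atTop tendsto_const_nhds hsq
    simpa using h1.const_mul (Real.exp B)
  rw [tendsto_iff_dist_tendsto_zero]
  apply squeeze_zero' (Eventually.of_forall fun M => dist_nonneg) _ hbound0
  filter_upwards [eventually_ge_atTop 1] with M hM
  calc dist (∫ x : Fin M → X, Real.log ((1 / (M : ℝ)) * ∑ i, Real.exp (g (x i)))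
          ∂(Measure.pi fun _ : Fin M => μ)) (Real.log (∫ x, Real.exp (g x) ∂μ))
      = dist (∫ x : Fin M → X, Real.log (avg M x) ∂(Measure.pi fun _ : Fin M => μ))
          (Real.log m) := rfl
    _ ≤ Real.exp B * I M := hfinal M hM
    _ ≤ Real.exp B * ((1 + V) / Real.sqrt M) :=
        mul_le_mul_of_nonneg_left (hIbound M hM) (Real.exp_pos B).le
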